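/- Let F:[0,1]^n → ℝ≥0 be differentiable and γ-weakly DR-submodular for γ ∈ (0,1], with all coordinate sums in [0,1]^n. Fix integers r ≥ 1, vectors x(1),…,x(r) ∈ [0,1]^n and weights p₁,…,p_r ∈ [0,1]. Define βγ(p) := γ²p/(1−p+γ²p) and the probabilistic sum ⊕ by (u ⊕ v)_i = u_i + v_i − u_i v_i. Then F(⊕_{i=1}^r p_i·x(i)) ≥ ∑_{S ⊆ [r]} (∏_{i∈S} βγ(p_i))·(∏_{i∉S} (1−βγ(p_i)))·F(⊕_{i∈S} x(i)), where the ⊕ over the empty set is the zero vector. -/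

import Mathlib

open Set

namespace Stmt15Aux

variable {n : ℕ}

/-- probabilistic OR of two vectors -/
def opl (u v : Fin n → ℝ) : Fin n → ℝ := fun j => u j + v j - u j * v j

lemma opl_eq (u v : Fin n → ℝ) (j : Fin n) : opl u v j = 1 - (1 - u j) * (1 - v j) := by
  simp only [opl]; ring

lemma mem_box_iff (u : Fin n → ℝ) :
    u ∈ Icc (0 : Fin n → ℝ) 1 ↔ ∀ j, 0 ≤ u j ∧ u j ≤ 1 := by
  constructor
  · intro h j; exact ⟨h.1 j, h.2 j⟩
  · intro h; exact ⟨fun j => (h j).1, fun j => (h j).2⟩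

lemma opl_mem_box {u v : Fin n → ℝ} (hu : u ∈ Icc (0 : Fin n → ℝ) 1)
    (hv : v ∈ Icc (0 : Fin n → ℝ) 1) : opl u v ∈ Icc (0 : Fin n → ℝ) 1 := by
  rw [mem_box_iff] at hu hv ⊢
  intro j
  obtain ⟨h1, h2⟩ := hu j
  obtain ⟨h3, h4⟩ := hv j
  constructor <;> rw [show opl u v j = 1 - (1 - u j) * (1 - v j) from opl_eq u v j] <;> nlinarith

lemma opl_mono {u v : Fin n → ℝ} (y : Fin n → ℝ) (hy : y ∈ Icc (0 : Fin n → ℝ) 1)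
    (huv : u ≤ v) : opl u y ≤ opl v y := by
  intro j
  have h1 : u j ≤ v j := huv j
  have h2 : y j ≤ 1 := hy.2 j
  simp only [opl]
  nlinarith

/-- directional derivative as sum of partials -/
lemma fderiv_apply_eq_sum (F : (Fin n → ℝ) → ℝ) (u w : Fin n → ℝ) :
    fderiv ℝ F u w = ∑ i, w i * fderiv ℝ F u (Pi.single i 1) := by
  have hw : w = ∑ i, w i • (Pi.single i (1:ℝ) : Fin n → ℝ) := by
    funext j
    simp [Finset.sum_apply, Pi.single_apply, eq_comm]
  conv_lhs => rw [hw]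
  rw [map_sum]
  congr 1; funext i
  rw [map_smul]; rfl

lemma hasDerivAt_line (F : (Fin n → ℝ) → ℝ) (hF : Differentiable ℝ F)
    (z w : Fin n → ℝ) (t : ℝ) :
    HasDerivAt (fun s : ℝ => F (z + s • w)) (fderiv ℝ F (z + t • w) w) t := by
  have hline : HasDerivAt (fun s : ℝ => z + s • w) w t := by
    simpa using ((hasDerivAt_id t).smul_const w).const_add z
  have hFd : HasFDerivAt F (fderiv ℝ F (z + t • w)) (z + t • w) :=
    (hF (z + t • w)).hasFDerivAt
  exact hFd.comp_hasDerivAt t hline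

/-- Key one-dimensional increment bound. -/
lemma stepB (γ : ℝ) (hγ0 : 0 < γ) (hγ1 : γ ≤ 1) (F : (Fin n → ℝ) → ℝ)
    (hF : Differentiable ℝ F)
    (hDR : ∀ x ∈ Icc (0:Fin n → ℝ) 1, ∀ y ∈ Icc (0:Fin n → ℝ) 1, x ≤ y →
      ∀ i, γ * fderiv ℝ F y (Pi.single i 1) ≤ fderiv ℝ F x (Pi.single i 1))
    (z : Fin n → ℝ) (hz : z ∈ Icc (0:Fin n → ℝ) 1)
    (y : Fin n → ℝ) (hy : y ∈ Icc (0:Fin n → ℝ) 1)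
    (q : ℝ) (hq0 : 0 ≤ q) (hq1 : q ≤ 1) :
    (1 - γ^2*q/(1-q+γ^2*q)) * F z + (γ^2*q/(1-q+γ^2*q)) * F (opl z y)
      ≤ F (opl z (fun j => q * y j)) := by
  set w : Fin n → ℝ := fun j => y j * (1 - z j) with hw
  have hw0 : ∀ j, 0 ≤ w j := fun j =>
    mul_nonneg (hy.1 j) (by have := hz.2 j; simp only [Pi.one_apply] at this; linarith)
  have hmem : ∀ t : ℝ, 0 ≤ t → t ≤ 1 → z + t • w ∈ Icc (0 : Fin n → ℝ) 1 := by
    intro t ht0 ht1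
    constructor <;> intro j
    · have := hz.1 j
      simp only [Pi.zero_apply, Pi.add_apply, Pi.smul_apply, smul_eq_mul] at this ⊢
      have := mul_nonneg ht0 (hw0 j); linarith
    · have h1 := hz.2 j
      have h2 := hy.2 j
      have h3 := hy.1 j
      have h4 := hz.1 j
      simp only [Pi.one_apply, Pi.zero_apply] at h1 h2 h3 h4
      simp only [Pi.add_apply, Pi.smul_apply, Pi.one_apply, smul_eq_mul, hw]
      nlinarith [mul_le_one₀ ht1 h3 h2, mul_nonneg ht0 h3]
  have hcomp : ∀ s t : ℝ, 0 ≤ s → s ≤ t → t ≤ 1 →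
      γ * fderiv ℝ F (z + t • w) w ≤ fderiv ℝ F (z + s • w) w := by
    intro s t hs hst ht1
    rw [fderiv_apply_eq_sum, fderiv_apply_eq_sum, Finset.mul_sum]
    apply Finset.sum_le_sum
    intro i _
    have hle : z + s • w ≤ z + t • w := by
      intro j
      simp only [Pi.add_apply, Pi.smul_apply, smul_eq_mul]
      nlinarith [hw0 j]
    have h := hDR (z + s • w) (hmem s hs (hst.trans ht1)) (z + t • w)
      (hmem t (hs.trans hst) ht1) hle i
    calc γ * (w i * fderiv ℝ F (z + t • w) (Pi.single i 1))
        = w i * (γ * fderiv ℝ F (z + t • w) (Pi.single i 1)) := by ring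
      _ ≤ w i * fderiv ℝ F (z + s • w) (Pi.single i 1) :=
          mul_le_mul_of_nonneg_left h (hw0 i)
  set c : ℝ := fderiv ℝ F (z + q • w) w with hc
  have hgdiff : ∀ t : ℝ, HasDerivAt (fun s : ℝ => F (z + s • w))
      (fderiv ℝ F (z + t • w) w) t := hasDerivAt_line F hF z w
  have hA : γ * c * q ≤ F (z + q • w) - F (z + (0:ℝ) • w) := by
    have hmono : MonotoneOn (fun t : ℝ => F (z + t • w) - (γ * c) * t) (Icc 0 q) := by
      apply monotoneOn_of_deriv_nonneg (convex_Icc 0 q)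
      · have hcz : Continuous (fun t : ℝ => F (z + t • w)) :=
          (hF.continuous).comp (continuous_const.add (continuous_id.smul continuous_const))
        exact (hcz.sub (continuous_const.mul continuous_id)).continuousOn
      · intro t _
        exact (((hgdiff t).sub ((hasDerivAt_id t).const_mul (γ*c))).differentiableAt).differentiableWithinAt
      · intro t ht
        rw [interior_Icc] at ht
        have hd : HasDerivAt (fun t : ℝ => F (z + t • w) - (γ * c) * t)
            (fderiv ℝ F (z + t • w) w - γ * c * 1) t :=
          (hgdiff t).sub ((hasDerivAt_id t).const_mul (γ*c))
        rw [hd.deriv]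
        have := hcomp t q ht.1.le ht.2.le hq1
        simp only [mul_one]
        linarith
    have := hmono (left_mem_Icc.2 hq0) (right_mem_Icc.2 hq0) hq0
    simp only [mul_zero] at this
    linarith
  have hB : γ * (F (z + (1:ℝ) • w) - F (z + q • w)) ≤ c * (1 - q) := by
    have hmono : MonotoneOn (fun t : ℝ => (c / γ) * t - F (z + t • w)) (Icc q 1) := by
      apply monotoneOn_of_deriv_nonneg (convex_Icc q 1)
      · have hcz : Continuous (fun t : ℝ => F (z + t • w)) :=
          (hF.continuous).comp (continuous_const.add (continuous_id.smul continuous_const))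
        exact ((continuous_const.mul continuous_id).sub hcz).continuousOn
      · intro t _
        exact ((((hasDerivAt_id t).const_mul (c/γ)).sub (hgdiff t)).differentiableAt).differentiableWithinAt
      · intro t ht
        rw [interior_Icc] at ht
        have hd : HasDerivAt (fun t : ℝ => (c / γ) * t - F (z + t • w))
            (c / γ * 1 - fderiv ℝ F (z + t • w) w) t :=
          ((hasDerivAt_id t).const_mul (c/γ)).sub (hgdiff t)
        rw [hd.deriv]
        have := hcomp q t hq0 ht.1.le ht.2.le
        rw [sub_nonneg, mul_one, le_div_iff₀ hγ0]
        linarith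
    have := hmono (left_mem_Icc.2 hq1) (right_mem_Icc.2 hq1) hq1
    have h2 : γ * ((c / γ) * 1 - (c / γ) * q) = c * (1 - q) := by
      field_simp
    nlinarith [this]
  have h0 : z + (0:ℝ) • w = z := by simp
  have hqpt : z + q • w = opl z (fun j => q * y j) := by
    funext j; simp only [Pi.add_apply, Pi.smul_apply, smul_eq_mul, opl, hw]; ring
  have h1pt : z + (1:ℝ) • w = opl z y := by
    funext j; simp only [Pi.add_apply, Pi.smul_apply, smul_eq_mul, opl, hw]; ring
  rw [h0] at hA
  rw [h1pt] at hB
  rw [hqpt] at hA hB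
  set G0 := F z
  set Gq := F (opl z (fun j => q * y j))
  set G1 := F (opl z y)
  have hγsq : γ^2 ≤ 1 := by nlinarith
  have hd : (0:ℝ) < 1 - q + γ^2*q := by
    nlinarith [mul_pos hγ0 hγ0, mul_nonneg (sub_nonneg.2 hq1) (sub_nonneg.2 hγsq)]
  have hkey : γ^2 * q * (G1 - G0) ≤ (1 - q + γ^2*q) * (Gq - G0) := by
    nlinarith [mul_le_mul_of_nonneg_left hB (mul_nonneg hγ0.le hq0),
      mul_le_mul_of_nonneg_left hA (sub_nonneg.2 hq1)]
  have hfin : (γ^2*q/(1-q+γ^2*q)) * (G1 - G0) ≤ Gq - G0 := by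
    rw [div_mul_eq_mul_div, div_le_iff₀ hd]
    nlinarith [hkey]
  linarith

noncomputable def Lmap (y : Fin n → ℝ) : (Fin n → ℝ) →L[ℝ] (Fin n → ℝ) :=
  ContinuousLinearMap.pi (fun j => (1 - y j) • (ContinuousLinearMap.proj j))

lemma Lmap_apply (y u : Fin n → ℝ) (j : Fin n) : Lmap y u j = (1 - y j) * u j := rfl

lemma opl_eq_L (y u : Fin n → ℝ) : opl u y = Lmap y u + y := by
  funext j
  simp only [opl, Pi.add_apply, Lmap_apply]; ring

lemma hasFDerivAt_G (F : (Fin n → ℝ) → ℝ) (hF : Differentiable ℝ F) (y u : Fin n → ℝ) :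
    HasFDerivAt (fun u => F (opl u y)) ((fderiv ℝ F (opl u y)).comp (Lmap y)) u := by
  have h1 : HasFDerivAt (fun u => opl u y) (Lmap y) u := by
    have : (fun u : Fin n → ℝ => opl u y) = fun u => Lmap y u + y := by
      funext u; exact opl_eq_L y u
    rw [this]
    exact (Lmap y).hasFDerivAt.add_const y
  exact ((hF (opl u y)).hasFDerivAt).comp u h1

lemma G_differentiable (F : (Fin n → ℝ) → ℝ) (hF : Differentiable ℝ F) (y : Fin n → ℝ) :
    Differentiable ℝ (fun u => F (opl u y)) :=
  fun u => (hasFDerivAt_G F hF y u).differentiableAt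

lemma fderiv_G (F : (Fin n → ℝ) → ℝ) (hF : Differentiable ℝ F) (y u : Fin n → ℝ) (i : Fin n) :
    fderiv ℝ (fun u => F (opl u y)) u (Pi.single i 1)
      = (1 - y i) * fderiv ℝ F (opl u y) (Pi.single i 1) := by
  rw [(hasFDerivAt_G F hF y u).fderiv]
  have hsingle : Lmap y (Pi.single i 1) = (1 - y i) • (Pi.single i (1:ℝ) : Fin n → ℝ) := by
    funext j
    simp only [Lmap_apply, Pi.smul_apply, smul_eq_mul, Pi.single_apply]
    by_cases h : j = i <;> simp [h]
  simp only [ContinuousLinearMap.comp_apply, hsingle, map_smul, smul_eq_mul]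

/-- DR closure under `u ↦ F (u ⊕ y)` -/
lemma G_DR (γ : ℝ) (F : (Fin n → ℝ) → ℝ) (hF : Differentiable ℝ F)
    (hDR : ∀ x ∈ Icc (0:Fin n → ℝ) 1, ∀ y ∈ Icc (0:Fin n → ℝ) 1, x ≤ y →
      ∀ i, γ * fderiv ℝ F y (Pi.single i 1) ≤ fderiv ℝ F x (Pi.single i 1))
    (y : Fin n → ℝ) (hy : y ∈ Icc (0:Fin n → ℝ) 1) :
    ∀ u ∈ Icc (0:Fin n → ℝ) 1, ∀ v ∈ Icc (0:Fin n → ℝ) 1, u ≤ v →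
      ∀ i, γ * fderiv ℝ (fun u => F (opl u y)) v (Pi.single i 1)
        ≤ fderiv ℝ (fun u => F (opl u y)) u (Pi.single i 1) := by
  intro u hu v hv huv i
  rw [fderiv_G F hF y u i, fderiv_G F hF y v i]
  have hyi : 0 ≤ 1 - y i := by have := hy.2 i; simp only [Pi.one_apply] at this; linarith
  have h := hDR (opl u y) (opl_mem_box hu hy) (opl v y) (opl_mem_box hv hy)
    (opl_mono y hy huv) i
  calc γ * ((1 - y i) * fderiv ℝ F (opl v y) (Pi.single i 1))
      = (1 - y i) * (γ * fderiv ℝ F (opl v y) (Pi.single i 1)) := by ring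
    _ ≤ (1 - y i) * fderiv ℝ F (opl u y) (Pi.single i 1) :=
        mul_le_mul_of_nonneg_left h hyi

/-- probabilistic sum over a finite family -/
def psum {ι : Type*} (S : Finset ι) (x : ι → Fin n → ℝ) : Fin n → ℝ :=
  fun j => 1 - ∏ i ∈ S, (1 - x i j)

lemma psum_insert {ι : Type*} [DecidableEq ι] {a : ι} {S : Finset ι} (ha : a ∉ S)
    (x : ι → Fin n → ℝ) : psum (insert a S) x = opl (psum S x) (x a) := by
  funext j
  simp only [psum, opl, Finset.prod_insert ha]
  ring

lemma psum_mem_box {ι : Type*} (S : Finset ι) (x : ι → Fin n → ℝ)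
    (hx : ∀ i, x i ∈ Icc (0:Fin n → ℝ) 1) : psum S x ∈ Icc (0:Fin n → ℝ) 1 := by
  rw [mem_box_iff]
  intro j
  have h1 : (0:ℝ) ≤ ∏ i ∈ S, (1 - x i j) := by
    apply Finset.prod_nonneg
    intro i _
    have := (hx i).2 j; simp only [Pi.one_apply] at this; linarith
  have h2 : ∏ i ∈ S, (1 - x i j) ≤ 1 := by
    apply Finset.prod_le_one
    · intro i _
      have := (hx i).2 j; simp only [Pi.one_apply] at this; linarith
    · intro i _
      have := (hx i).1 j; simp only [Pi.zero_apply] at this; linarith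
  constructor <;> simp only [psum] <;> linarith

/-- The main mixture inequality, by induction on the index set. -/
lemma main {ι : Type*} [DecidableEq ι] (γ : ℝ) (hγ0 : 0 < γ) (hγ1 : γ ≤ 1)
    (x : ι → Fin n → ℝ) (hx : ∀ i, x i ∈ Icc (0:Fin n → ℝ) 1)
    (p : ι → ℝ) (hp : ∀ i, 0 ≤ p i ∧ p i ≤ 1)
    (T : Finset ι) :
    ∀ F : (Fin n → ℝ) → ℝ, Differentiable ℝ F →
    (∀ u ∈ Icc (0:Fin n → ℝ) 1, ∀ v ∈ Icc (0:Fin n → ℝ) 1, u ≤ v →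
      ∀ i, γ * fderiv ℝ F v (Pi.single i 1) ≤ fderiv ℝ F u (Pi.single i 1)) →
    ∑ S ∈ T.powerset,
        (∏ i ∈ S, γ^2 * p i / (1 - p i + γ^2 * p i)) *
        (∏ i ∈ T \ S, (1 - γ^2 * p i / (1 - p i + γ^2 * p i))) *
        F (psum S x)
      ≤ F (psum T (fun i j => p i * x i j)) := by
  -- basic facts about β
  have hγsq : γ^2 ≤ 1 := by nlinarith
  have hden : ∀ i, (0:ℝ) < 1 - p i + γ^2 * p i := by
    intro i
    nlinarith [mul_pos hγ0 hγ0, (hp i).1, (hp i).2,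
      mul_nonneg (sub_nonneg.2 (hp i).2) (sub_nonneg.2 hγsq)]
  have hβ0 : ∀ i, (0:ℝ) ≤ γ^2 * p i / (1 - p i + γ^2 * p i) := by
    intro i
    apply div_nonneg _ (hden i).le
    nlinarith [(hp i).1]
  have hβ1 : ∀ i, γ^2 * p i / (1 - p i + γ^2 * p i) ≤ 1 := by
    intro i
    rw [div_le_one (hden i)]
    nlinarith [(hp i).2]
  have hpx : ∀ i, (fun j => p i * x i j) ∈ Icc (0:Fin n → ℝ) 1 := by
    intro i
    rw [mem_box_iff]
    intro j
    have h1 := (hx i).1 j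
    have h2 := (hx i).2 j
    simp only [Pi.zero_apply, Pi.one_apply] at h1 h2
    constructor
    · exact mul_nonneg (hp i).1 h1
    · exact mul_le_one₀ (hp i).2 h1 h2
  induction T using Finset.induction_on with
  | empty =>
    intro F hF hDR
    have he : psum (∅ : Finset ι) x = psum ∅ fun i j => p i * x i j := by
      funext j; simp [psum]
    simp [he]
  | @insert a T ha IH =>
    intro F hF hDR
    set β : ι → ℝ := fun i => γ^2 * p i / (1 - p i + γ^2 * p i) with hβ
    -- rewrite RHS
    have hz : psum T (fun i j => p i * x i j) ∈ Icc (0:Fin n → ℝ) 1 :=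
      psum_mem_box T _ hpx
    set z := psum T (fun i j => p i * x i j) with hzdef
    have hrhs : psum (insert a T) (fun i j => p i * x i j)
        = opl z (fun j => p a * x a j) := psum_insert ha _
    rw [hrhs]
    -- split the sum
    rw [Finset.sum_powerset_insert ha]
    -- first part
    have hsplit1 : ∀ S ∈ T.powerset,
        (∏ i ∈ S, β i) * (∏ i ∈ (insert a T) \ S, (1 - β i)) * F (psum S x)
        = (1 - β a) * ((∏ i ∈ S, β i) * (∏ i ∈ T \ S, (1 - β i)) * F (psum S x)) := by
      intro S hS
      have haS : a ∉ S := fun h => ha (Finset.mem_powerset.1 hS h)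
      have h1 : (insert a T) \ S = insert a (T \ S) := by
        rw [Finset.insert_sdiff_of_notMem _ haS]
      have h2 : a ∉ T \ S := fun h => ha (Finset.mem_sdiff.1 h).1
      rw [h1, Finset.prod_insert h2]
      ring
    have hsplit2 : ∀ S ∈ T.powerset,
        (∏ i ∈ insert a S, β i) * (∏ i ∈ (insert a T) \ (insert a S), (1 - β i)) *
          F (psum (insert a S) x)
        = β a * ((∏ i ∈ S, β i) * (∏ i ∈ T \ S, (1 - β i)) * F (opl (psum S x) (x a))) := by
      intro S hS
      have haS : a ∉ S := fun h => ha (Finset.mem_powerset.1 hS h)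
      have h1 : (insert a T) \ (insert a S) = T \ S := by
        rw [Finset.insert_sdiff_insert, Finset.sdiff_insert, Finset.erase_eq_of_notMem]
        intro h; exact ha (Finset.mem_sdiff.1 h).1
      rw [h1, Finset.prod_insert haS, psum_insert haS]
      ring
    rw [Finset.sum_congr rfl hsplit1, Finset.sum_congr rfl hsplit2,
      ← Finset.mul_sum, ← Finset.mul_sum]
    -- IH for F
    have hIH1 : ∑ S ∈ T.powerset,
        (∏ i ∈ S, β i) * (∏ i ∈ T \ S, (1 - β i)) * F (psum S x) ≤ F z := IH F hF hDR
    -- IH for G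
    set G : (Fin n → ℝ) → ℝ := fun u => F (opl u (x a)) with hG
    have hGdiff : Differentiable ℝ G := G_differentiable F hF (x a)
    have hGDR := G_DR γ F hF hDR (x a) (hx a)
    have hIH2 : ∑ S ∈ T.powerset,
        (∏ i ∈ S, β i) * (∏ i ∈ T \ S, (1 - β i)) * F (opl (psum S x) (x a))
        ≤ F (opl z (x a)) := IH G hGdiff hGDR
    -- the step inequality
    have hstep := stepB γ hγ0 hγ1 F hF hDR z hz (x a) (hx a) (p a) (hp a).1 (hp a).2
    have h1βa : 0 ≤ 1 - β a := by have := hβ1 a; linarith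
    have hβa : 0 ≤ β a := hβ0 a
    calc (1 - β a) * (∑ S ∈ T.powerset,
            (∏ i ∈ S, β i) * (∏ i ∈ T \ S, (1 - β i)) * F (psum S x))
          + β a * (∑ S ∈ T.powerset,
            (∏ i ∈ S, β i) * (∏ i ∈ T \ S, (1 - β i)) * F (opl (psum S x) (x a)))
        ≤ (1 - β a) * F z + β a * F (opl z (x a)) := by
          have := mul_le_mul_of_nonneg_left hIH1 h1βa
          have := mul_le_mul_of_nonneg_left hIH2 hβa
          gcongr
      _ ≤ F (opl z (fun j => p a * x a j)) := hstep

end Stmt15Aux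

open Stmt15Aux

/-- the weakly-DR mixture inequality. For a differentiable, nonnegative,
γ-weakly DR-submodular `F : [0,1]^n → ℝ≥0`, vectors `x(1),…,x(r) ∈ [0,1]^n` and
weights `p₁,…,p_r ∈ [0,1]`, with `βγ(p) := γ²p/(1−p+γ²p)` and probabilistic sum
`(⊕_{i∈S} v(i))_j = 1 − ∏_{i∈S} (1 − v(i)_j)`,
`F(⊕_i p_i x(i)) ≥ ∑_{S⊆[r]} (∏_{i∈S} βγ(p_i)) (∏_{i∉S} (1−βγ(p_i))) F(⊕_{i∈S} x(i))`. -/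
theorem stmt15 (n r : ℕ) (hr : 1 ≤ r) (γ : ℝ) (hγ0 : 0 < γ) (hγ1 : γ ≤ 1)
    (F : (Fin n → ℝ) → ℝ)
    (hF : Differentiable ℝ F)
    (hnonneg : ∀ x ∈ Icc (0 : Fin n → ℝ) 1, 0 ≤ F x)
    (hDR : ∀ x ∈ Icc (0 : Fin n → ℝ) 1, ∀ y ∈ Icc (0 : Fin n → ℝ) 1,
      x ≤ y → ∀ i, γ * fderiv ℝ F y (Pi.single i 1) ≤ fderiv ℝ F x (Pi.single i 1))
    (x : Fin r → (Fin n → ℝ)) (hx : ∀ i, x i ∈ Icc (0 : Fin n → ℝ) 1)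
    (p : Fin r → ℝ) (hp : ∀ i, p i ∈ Icc (0 : ℝ) 1) :
    ∑ S ∈ Finset.univ.powerset,
        (∏ i ∈ S, γ ^ 2 * p i / (1 - p i + γ ^ 2 * p i)) *
        (∏ i ∈ Sᶜ, (1 - γ ^ 2 * p i / (1 - p i + γ ^ 2 * p i))) *
        F (fun j => 1 - ∏ i ∈ S, (1 - x i j))
      ≤ F (fun j => 1 - ∏ i : Fin r, (1 - p i * x i j)) := by
  have h := main γ hγ0 hγ1 x hx p (fun i => ⟨(hp i).1, (hp i).2⟩) Finset.univ F hF hDR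
  have hcompl : ∀ S : Finset (Fin r), Sᶜ = Finset.univ \ S := fun S =>
    (Finset.compl_eq_univ_sdiff S)
  unfold psum at h
  calc ∑ S ∈ Finset.univ.powerset,
        (∏ i ∈ S, γ ^ 2 * p i / (1 - p i + γ ^ 2 * p i)) *
        (∏ i ∈ Sᶜ, (1 - γ ^ 2 * p i / (1 - p i + γ ^ 2 * p i))) *
        F (fun j => 1 - ∏ i ∈ S, (1 - x i j))
      = ∑ S ∈ Finset.univ.powerset,
        (∏ i ∈ S, γ ^ 2 * p i / (1 - p i + γ ^ 2 * p i)) *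
        (∏ i ∈ Finset.univ \ S, (1 - γ ^ 2 * p i / (1 - p i + γ ^ 2 * p i))) *
        F (fun j => 1 - ∏ i ∈ S, (1 - x i j)) := by
        apply Finset.sum_congr rfl
        intro S _
        rw [hcompl S]
    _ ≤ F (fun j => 1 - ∏ i : Fin r, (1 - p i * x i j)) := h
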